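/- Let q > 0 be real, set η = arccosh((q + q⁻¹ + 1)/2) > 0, and define the 9×9 real matrix P₀ by (q + q⁻¹ + 1)·P₀ = q⁻¹·E₁₁⊗E₃₃ + q^{−1/2}·E₁₂⊗E₃₂ + E₁₃⊗E₃₁ + q^{−1/2}·E₂₁⊗E₂₃ + E₂₂⊗E₂₂ + q^{1/2}·E₂₃⊗E₂₁ + E₃₁⊗E₁₃ + q^{1/2}·E₃₂⊗E₁₂ + q·E₃₃⊗E₁₁, where E_{ij} are 3×3 elementary matrices and ⊗ is the Kronecker product. For real θ with θ ≠ −η define R̂(θ) = I₉ + (sinh(η−θ)/sinh(η+θ) − 1)·P₀. Then for all real θ, θ′ with θ ≠ −η, θ′ ≠ −η and θ+θ′ ≠ −η, the Baxterized braid equation holds: R̂₁₂(θ)·R̂₂₃(θ+θ′)·R̂₁₂(θ′) = R̂₂₃(θ′)·R̂₁₂(θ+θ′)·R̂₂₃(θ), where for a 9×9 matrix A one sets A₁₂ = A ⊗ I₃ and A₂₃ = I₃ ⊗ A (27×27 Kronecker products). -/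

import Mathlib

open Matrix Kronecker

/-- `3×3` elementary matrix with a single `1` at position `(i,j)`. -/
noncomputable def e3 (i j : Fin 3) : Matrix (Fin 3) (Fin 3) ℝ :=
  Matrix.single i j 1

/-- The rank-one projector `P₀` of the new class of `SO_q(3)` braid matrices:
`(q + q⁻¹ + 1) P₀ = q⁻¹ E₁₁⊗E₃₃ + q^{-1/2} E₁₂⊗E₃₂ + E₁₃⊗E₃₁ + q^{-1/2} E₂₁⊗E₂₃
 + E₂₂⊗E₂₂ + q^{1/2} E₂₃⊗E₂₁ + E₃₁⊗E₁₃ + q^{1/2} E₃₂⊗E₁₂ + q E₃₃⊗E₁₁`. -/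
noncomputable def P0so3 (q : ℝ) : Matrix (Fin 3 × Fin 3) (Fin 3 × Fin 3) ℝ :=
  (q + q⁻¹ + 1)⁻¹ •
    (q⁻¹ • (e3 0 0 ⊗ₖ e3 2 2) + (Real.sqrt q)⁻¹ • (e3 0 1 ⊗ₖ e3 2 1)
      + e3 0 2 ⊗ₖ e3 2 0
      + (Real.sqrt q)⁻¹ • (e3 1 0 ⊗ₖ e3 1 2) + e3 1 1 ⊗ₖ e3 1 1
      + Real.sqrt q • (e3 1 2 ⊗ₖ e3 1 0)
      + e3 2 0 ⊗ₖ e3 0 2 + Real.sqrt q • (e3 2 1 ⊗ₖ e3 0 1)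
      + q • (e3 2 2 ⊗ₖ e3 0 0))

/-- The inverse hyperbolic cosine, `arccosh x = log (x + √(x² - 1))` (for `x ≥ 1`). -/
noncomputable def arccosh (x : ℝ) : ℝ := Real.log (x + Real.sqrt (x ^ 2 - 1))

/-- `η = arccosh((q + q⁻¹ + 1)/2)`. -/
noncomputable def etaSO3 (q : ℝ) : ℝ := arccosh ((q + q⁻¹ + 1) / 2)

/-- The Baxterized `SO_q(3)` braid matrix
`R̂(θ) = I₉ + (sinh(η-θ)/sinh(η+θ) - 1) P₀`. -/
noncomputable def Rso3 (q θ : ℝ) : Matrix (Fin 3 × Fin 3) (Fin 3 × Fin 3) ℝ :=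
  1 + (Real.sinh (etaSO3 q - θ) / Real.sinh (etaSO3 q + θ) - 1) • P0so3 q

/-- `A₁₂ = A ⊗ I₃`, acting on the first two factors of `ℂ³⊗ℂ³⊗ℂ³`. -/
noncomputable def so3op12 (A : Matrix (Fin 3 × Fin 3) (Fin 3 × Fin 3) ℝ) :
    Matrix (Fin 3 × Fin 3 × Fin 3) (Fin 3 × Fin 3 × Fin 3) ℝ :=
  Matrix.reindex (Equiv.prodAssoc (Fin 3) (Fin 3) (Fin 3))
    (Equiv.prodAssoc (Fin 3) (Fin 3) (Fin 3))
    (A ⊗ₖ (1 : Matrix (Fin 3) (Fin 3) ℝ))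

/-- `A₂₃ = I₃ ⊗ A`, acting on the last two factors of `ℂ³⊗ℂ³⊗ℂ³`. -/
noncomputable def so3op23 (A : Matrix (Fin 3 × Fin 3) (Fin 3 × Fin 3) ℝ) :
    Matrix (Fin 3 × Fin 3 × Fin 3) (Fin 3 × Fin 3 × Fin 3) ℝ :=
  (1 : Matrix (Fin 3) (Fin 3) ℝ) ⊗ₖ A

/-! ### Auxiliary material -/

noncomputable def Umat (q : ℝ) : Matrix (Fin 3) (Fin 3) ℝ :=
  !![0, 0, (Real.sqrt q)⁻¹; 0, 1, 0; Real.sqrt q, 0, 0]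

noncomputable def Mmat (q : ℝ) : Matrix (Fin 3 × Fin 3) (Fin 3 × Fin 3) ℝ :=
  Matrix.of fun p r => Umat q p.1 p.2 * Umat q r.1 r.2

set_option maxHeartbeats 1000000 in
lemma Mform (q : ℝ) (hq : 0 < q) : P0so3 q = (q + q⁻¹ + 1)⁻¹ • Mmat q := by
  have hs : Real.sqrt q * Real.sqrt q = q := Real.mul_self_sqrt hq.le
  have hinv : (Real.sqrt q)⁻¹ * (Real.sqrt q)⁻¹ = q⁻¹ := by rw [← mul_inv, hs]
  have hs0 : Real.sqrt q ≠ 0 := by positivity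
  have hc1 : (Real.sqrt q)⁻¹ * Real.sqrt q = 1 := inv_mul_cancel₀ hs0
  have hc2 : Real.sqrt q * (Real.sqrt q)⁻¹ = 1 := mul_inv_cancel₀ hs0
  unfold P0so3
  congr 1
  ext ⟨a, b⟩ ⟨c, d⟩
  simp only [Matrix.add_apply, Matrix.smul_apply, Matrix.kroneckerMap_apply, e3,
    Matrix.single, Matrix.of_apply, Mmat, smul_eq_mul, Umat]
  fin_cases a <;> fin_cases b <;> fin_cases c <;> fin_cases d <;>
    norm_num [Matrix.vecHead, Matrix.vecTail, hinv, hs, hc1, hc2, Fin.ext_iff]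

set_option maxHeartbeats 1000000 in
lemma MsqM (q : ℝ) (hq : 0 < q) :
    Mmat q * Mmat q = (q + q⁻¹ + 1) • Mmat q := by
  have hs : Real.sqrt q * Real.sqrt q = q := Real.mul_self_sqrt hq.le
  have hinv : (Real.sqrt q)⁻¹ * (Real.sqrt q)⁻¹ = q⁻¹ := by rw [← mul_inv, hs]
  have e00 : Umat q 0 0 = 0 := by simp [Umat, Matrix.vecHead, Matrix.vecTail]
  have e01 : Umat q 0 1 = 0 := by simp [Umat, Matrix.vecHead, Matrix.vecTail]
  have e02 : Umat q 0 2 = (Real.sqrt q)⁻¹ := by simp [Umat, Matrix.vecHead, Matrix.vecTail]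
  have e10 : Umat q 1 0 = 0 := by simp [Umat, Matrix.vecHead, Matrix.vecTail]
  have e11 : Umat q 1 1 = 1 := by simp [Umat, Matrix.vecHead, Matrix.vecTail]
  have e12 : Umat q 1 2 = 0 := by simp [Umat, Matrix.vecHead, Matrix.vecTail]
  have e20 : Umat q 2 0 = Real.sqrt q := by simp [Umat, Matrix.vecHead, Matrix.vecTail]
  have e21 : Umat q 2 1 = 0 := by simp [Umat, Matrix.vecHead, Matrix.vecTail]
  have e22 : Umat q 2 2 = 0 := by simp [Umat, Matrix.vecHead, Matrix.vecTail]
  ext ⟨a, b⟩ ⟨c, d⟩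
  simp only [Matrix.mul_apply, Mmat, Matrix.of_apply, Matrix.smul_apply,
    Fintype.sum_prod_type, Fin.sum_univ_three, smul_eq_mul,
    e00, e01, e02, e10, e11, e12, e20, e21, e22]
  ring_nf
  linear_combination Umat q a b * Umat q c d * hinv + Umat q a b * Umat q c d * hs

lemma op12_apply (q : ℝ) (i j k l m n : Fin 3) :
    so3op12 (Mmat q) (i, j, k) (l, m, n)
      = Umat q i j * Umat q l m * (if k = n then 1 else 0) := by
  simp [so3op12, Mmat, Matrix.one_apply, Equiv.prodAssoc, mul_assoc]

lemma op23_apply (q : ℝ) (i j k l m n : Fin 3) :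
    so3op23 (Mmat q) (i, j, k) (l, m, n)
      = (if i = l then 1 else 0) * (Umat q j k * Umat q m n) := by
  simp [so3op23, Mmat, Matrix.one_apply]

set_option maxHeartbeats 2000000 in
lemma braidM (q : ℝ) (hq : 0 < q) :
    so3op12 (Mmat q) * so3op23 (Mmat q) * so3op12 (Mmat q) = so3op12 (Mmat q) := by
  have hs0 : Real.sqrt q ≠ 0 := by positivity
  have hc1 : (Real.sqrt q)⁻¹ * Real.sqrt q = 1 := inv_mul_cancel₀ hs0
  have hc2 : Real.sqrt q * (Real.sqrt q)⁻¹ = 1 := mul_inv_cancel₀ hs0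
  have hc3 : Real.sqrt q ^ 2 * (Real.sqrt q)⁻¹ ^ 2 = 1 := by field_simp
  ext ⟨i, j, k⟩ ⟨l, m, n⟩
  simp only [Matrix.mul_apply, op12_apply, op23_apply, Fintype.sum_prod_type,
    Fin.sum_univ_three]
  fin_cases k <;> fin_cases n <;>
    simp [Umat, Matrix.vecHead, Matrix.vecTail, hc1, hc2, hc3, mul_assoc, Fin.ext_iff] <;>
    (try (left; field_simp))

set_option maxHeartbeats 2000000 in
lemma braidM' (q : ℝ) (hq : 0 < q) :
    so3op23 (Mmat q) * so3op12 (Mmat q) * so3op23 (Mmat q) = so3op23 (Mmat q) := by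
  have hs0 : Real.sqrt q ≠ 0 := by positivity
  have hc1 : (Real.sqrt q)⁻¹ * Real.sqrt q = 1 := inv_mul_cancel₀ hs0
  have hc2 : Real.sqrt q * (Real.sqrt q)⁻¹ = 1 := mul_inv_cancel₀ hs0
  have hc3 : Real.sqrt q ^ 2 * (Real.sqrt q)⁻¹ ^ 2 = 1 := by field_simp
  ext ⟨i, j, k⟩ ⟨l, m, n⟩
  simp only [Matrix.mul_apply, op12_apply, op23_apply, Fintype.sum_prod_type,
    Fin.sum_univ_three]
  fin_cases i <;> fin_cases l <;>
    simp [Umat, Matrix.vecHead, Matrix.vecTail, hc1, hc2, hc3, mul_assoc, Fin.ext_iff] <;>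
    (try (left; field_simp))

lemma op12_mul (A B : Matrix (Fin 3 × Fin 3) (Fin 3 × Fin 3) ℝ) :
    so3op12 A * so3op12 B = so3op12 (A * B) := by
  simp only [so3op12, Matrix.reindex_apply]
  rw [Matrix.submatrix_mul_equiv, ← Matrix.mul_kronecker_mul, Matrix.one_mul]

lemma op12_one : so3op12 1 = 1 := by
  simp only [so3op12, Matrix.one_kronecker_one, Matrix.reindex_apply,
    Matrix.submatrix_one_equiv]

lemma op12_smul (c : ℝ) (A : Matrix (Fin 3 × Fin 3) (Fin 3 × Fin 3) ℝ) :
    so3op12 (c • A) = c • so3op12 A := by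
  ext p r
  simp [so3op12, Matrix.smul_kronecker]

lemma op12_add (A B : Matrix (Fin 3 × Fin 3) (Fin 3 × Fin 3) ℝ) :
    so3op12 (A + B) = so3op12 A + so3op12 B := by
  ext p r
  simp [so3op12, Matrix.add_kronecker]

lemma op23_mul (A B : Matrix (Fin 3 × Fin 3) (Fin 3 × Fin 3) ℝ) :
    so3op23 A * so3op23 B = so3op23 (A * B) := by
  simp only [so3op23]
  rw [← Matrix.mul_kronecker_mul, Matrix.one_mul]

lemma op23_one : so3op23 1 = 1 := Matrix.one_kronecker_one

lemma op23_smul (c : ℝ) (A : Matrix (Fin 3 × Fin 3) (Fin 3 × Fin 3) ℝ) :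
    so3op23 (c • A) = c • so3op23 A := by
  simp only [so3op23, Matrix.kronecker_smul]

lemma op23_add (A B : Matrix (Fin 3 × Fin 3) (Fin 3 × Fin 3) ℝ) :
    so3op23 (A + B) = so3op23 A + so3op23 B := by
  simp only [so3op23, Matrix.kronecker_add]

lemma cosh_eta (q : ℝ) (hq : 0 < q) :
    Real.cosh (etaSO3 q) = (q + q⁻¹ + 1) / 2 := by
  have hq2 : 2 ≤ q + q⁻¹ := by
    nlinarith [sq_nonneg (q - 1), hq, mul_inv_cancel₀ hq.ne', mul_pos hq (inv_pos.2 hq)]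
  set x : ℝ := (q + q⁻¹ + 1) / 2 with hx
  have hx1 : 1 ≤ x := by rw [hx]; linarith
  have hsq : 0 ≤ x ^ 2 - 1 := by nlinarith
  have hy : 0 < x + Real.sqrt (x ^ 2 - 1) := by positivity
  have hyy : (x + Real.sqrt (x ^ 2 - 1)) * (x - Real.sqrt (x ^ 2 - 1)) = 1 := by
    have := Real.sq_sqrt hsq
    nlinarith [this]
  have hinv : (x + Real.sqrt (x ^ 2 - 1))⁻¹ = x - Real.sqrt (x ^ 2 - 1) :=
    inv_eq_of_mul_eq_one_right hyy
  rw [etaSO3, arccosh, Real.cosh_log hy, hinv]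
  ring

/-- the Baxterized braid equation for the new class of `SO_q(3)` braid
matrices with additive spectral parameter. -/
theorem so3_new_class_braid_equation (q : ℝ) (hq : 0 < q) (θ θ' : ℝ)
    (h1 : θ ≠ -etaSO3 q) (h2 : θ' ≠ -etaSO3 q) (h3 : θ + θ' ≠ -etaSO3 q) :
    so3op12 (Rso3 q θ) * so3op23 (Rso3 q (θ + θ')) * so3op12 (Rso3 q θ') =
      so3op23 (Rso3 q θ') * so3op12 (Rso3 q (θ + θ')) * so3op23 (Rso3 q θ) := by
  have hNpos : (0:ℝ) < q + q⁻¹ + 1 := by positivity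
  set η := etaSO3 q with hη
  set N := q + q⁻¹ + 1 with hNdef
  have hN0 : N ≠ 0 := hNpos.ne'
  have hsne : ∀ t : ℝ, t ≠ -η → Real.sinh (η + t) ≠ 0 := by
    intro t ht h
    rw [Real.sinh_eq_zero] at h
    exact ht (by linarith)
  have hS1 := hsne θ h1
  have hS2 := hsne (θ + θ') h3
  have hS3 := hsne θ' h2
  have h2c : 2 * Real.cosh η = N := by rw [hη, cosh_eta q hq]; ring
  have hdiff : ∀ t : ℝ, Real.sinh (η - t) - Real.sinh (η + t)
      = -(2 * Real.cosh η * Real.sinh t) := by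
    intro t
    rw [Real.sinh_sub, Real.sinh_add]; ring
  have hc : ∀ t : ℝ, Real.sinh (η + t) ≠ 0 →
      (Real.sinh (η - t) / Real.sinh (η + t) - 1) * N⁻¹
        = -Real.sinh t / Real.sinh (η + t) := by
    intro t hS
    rw [div_sub_one hS, hdiff t, h2c]
    field_simp
  -- the three coefficients
  set x := -Real.sinh θ / Real.sinh (η + θ) with hx
  set y := -Real.sinh (θ + θ') / Real.sinh (η + (θ + θ')) with hy
  set z := -Real.sinh θ' / Real.sinh (η + θ') with hz
  -- key scalar identity
  have hE0 : (0:ℝ) < Real.exp η := Real.exp_pos η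
  have hEN : Real.exp η + (Real.exp η)⁻¹ = N := by
    have h := h2c
    rw [Real.cosh_eq, Real.exp_neg] at h
    linarith
  have hkey : x + z + N * (x * z) + x * y * z = y := by
    rw [hx, hy, hz]
    set A := Real.exp η with hA
    set B := Real.exp θ with hB
    set C := Real.exp θ' with hC
    have hA0 : A ≠ 0 := (Real.exp_pos η).ne'
    have hB0 : B ≠ 0 := (Real.exp_pos θ).ne'
    have hC0 : C ≠ 0 := (Real.exp_pos θ').ne'
    have hEN : A + A⁻¹ = N := by
      have h := h2c
      rw [Real.cosh_eq, Real.exp_neg, ← hA] at h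
      linarith
    have hsinh2 : ∀ u v : ℝ, Real.sinh (u + v)
        = ((Real.exp u) ^ 2 * (Real.exp v) ^ 2 - 1) / (2 * (Real.exp u * Real.exp v)) := by
      intro u v
      rw [Real.sinh_eq, Real.exp_neg, Real.exp_add]
      have h1 : Real.exp u ≠ 0 := (Real.exp_pos u).ne'
      have h2 : Real.exp v ≠ 0 := (Real.exp_pos v).ne'
      field_simp
    have hsinh1 : ∀ u : ℝ, Real.sinh u = ((Real.exp u) ^ 2 - 1) / (2 * Real.exp u) := by
      intro u
      rw [Real.sinh_eq, Real.exp_neg]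
      have h1 : Real.exp u ≠ 0 := (Real.exp_pos u).ne'
      field_simp
    have hBC : Real.exp (θ + θ') = B * C := by rw [Real.exp_add]
    have hsA : Real.sinh (η + θ) = (A ^ 2 * B ^ 2 - 1) / (2 * (A * B)) := hsinh2 η θ
    have hsB : Real.sinh (η + (θ + θ')) = (A ^ 2 * (B * C) ^ 2 - 1) / (2 * (A * (B * C))) := by
      rw [hsinh2 η (θ + θ'), hBC]
    have hsC : Real.sinh (η + θ') = (A ^ 2 * C ^ 2 - 1) / (2 * (A * C)) := hsinh2 η θ'
    have D1 : A ^ 2 * B ^ 2 - 1 ≠ 0 := by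
      intro h; exact hS1 (by rw [hsA, h, zero_div])
    have D2 : A ^ 2 * (B * C) ^ 2 - 1 ≠ 0 := by
      intro h; exact hS2 (by rw [hsB, h, zero_div])
    have D3 : A ^ 2 * C ^ 2 - 1 ≠ 0 := by
      intro h; exact hS3 (by rw [hsC, h, zero_div])
    rw [hsA, hsB, hsC, hsinh1 θ, hsinh1 θ', hsinh1 (θ + θ'), hBC, ← hEN]
    rw [← hB, ← hC]
    have D1' : B ^ 2 * A ^ 2 - 1 ≠ 0 := by intro h; apply D1; linear_combination h
    have D2' : B ^ 2 * A ^ 2 * C ^ 2 - 1 ≠ 0 := by intro h; apply D2; linear_combination h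
    field_simp
    ring
  -- matrix algebra
  have hP0 : P0so3 q = N⁻¹ • Mmat q := Mform q hq
  set E12 := so3op12 (Mmat q) with hE12
  set E23 := so3op23 (Mmat q) with hE23
  have hR12 : ∀ t : ℝ, Real.sinh (η + t) ≠ 0 → so3op12 (Rso3 q t)
      = 1 + (-Real.sinh t / Real.sinh (η + t)) • E12 := by
    intro t ht
    rw [Rso3, hP0, smul_smul, op12_add, op12_one, op12_smul, ← hη, hc t ht]
  have hR23 : ∀ t : ℝ, Real.sinh (η + t) ≠ 0 → so3op23 (Rso3 q t)
      = 1 + (-Real.sinh t / Real.sinh (η + t)) • E23 := by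
    intro t ht
    rw [Rso3, hP0, smul_smul, op23_add, op23_one, op23_smul, ← hη, hc t ht]
  rw [hR12 θ hS1, hR12 (θ + θ') hS2, hR12 θ' hS3, hR23 θ hS1, hR23 (θ + θ') hS2,
    hR23 θ' hS3, ← hx, ← hy, ← hz]
  have hB : E12 * E23 * E12 = E12 := braidM q hq
  have hB' : E23 * E12 * E23 = E23 := braidM' q hq
  have h12sq : E12 * E12 = N • E12 := by
    rw [hE12, op12_mul, MsqM q hq, op12_smul]
  have h23sq : E23 * E23 = N • E23 := by
    rw [hE23, op23_mul, MsqM q hq, op23_smul]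
  simp only [mul_add, add_mul, one_mul, mul_one, smul_mul_assoc, mul_smul_comm,
    smul_smul, hB, hB', h12sq, h23sq]
  match_scalars <;> first
    | ring1
    | linear_combination hkey
    | linear_combination -hkey
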